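/- For every entire function f, the Lisbon integral of z·f(z) is obtained by applying the companion matrix: Φ_{zf}(s) = A(s)·Φ_f(s) for all s ∈ ℂ^k, where zf denotes the entire function ζ ↦ ζ f(ζ). -/

import Mathlib

open Matrix Complex

noncomputable section

/-- The universal monic polynomial `P_s(z) = Σ_{h=0}^{k} (−1)^h s_h z^{k−h}` (with `s_0 = 1`),
where `s i` represents the `(i+1)`-st coefficient `s_{i+1}`. -/
def LP (k : ℕ) (s : Fin k → ℂ) (z : ℂ) : ℂ :=
  z ^ k + ∑ i : Fin k, (-1 : ℂ) ^ ((i : ℕ) + 1) * s i * z ^ (k - 1 - (i : ℕ))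

/-- The companion matrix `A(s)` of `P_s`: `A(s)_{i,i+1} = 1` for `1 ≤ i ≤ k−1`, the last
row is `((−1)^{k−1} s_k, …, s_1)` (here `0`-indexed: `s i` is `s_{i+1}`). -/
def LcompA (k : ℕ) (s : Fin k → ℂ) : Matrix (Fin k) (Fin k) ℂ := fun i j =>
  if (i : ℕ) = k - 1 then
    (-1 : ℂ) ^ (k - 1 - (j : ℕ)) * s ⟨k - 1 - (j : ℕ), by have := j.isLt; omega⟩
  else if (j : ℕ) = (i : ℕ) + 1 then 1 else 0

/-- `Φ_{zf}(s) = A(s) · Φ_f(s)`, where `zf : ζ ↦ ζ f(ζ)`. -/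
theorem lisbon_Phi_z_mul
    (k : ℕ) (hk : 2 ≤ k) (f : ℂ → ℂ) (hf : Differentiable ℂ f)
    (s : Fin k → ℂ) (R : ℝ) (hR : 0 < R)
    (hroots : ∀ z : ℂ, LP k s z = 0 → ‖z‖ < R) :
    (fun h : Fin k => (2 * Real.pi * Complex.I)⁻¹ *
        ∮ ζ in C(0, R), (ζ * f ζ) * ζ ^ (h : ℕ) / LP k s ζ)
      = LcompA k s *ᵥ (fun h : Fin k => (2 * Real.pi * Complex.I)⁻¹ *
          ∮ ζ in C(0, R), f ζ * ζ ^ (h : ℕ) / LP k s ζ) := by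
  classical
  have hLPcont : Continuous (LP k s) := by unfold LP; continuity
  have hLPne : ∀ ζ ∈ Metric.sphere (0:ℂ) R, LP k s ζ ≠ 0 := by
    intro ζ hζ h0
    have h1 := hroots ζ h0
    rw [Metric.mem_sphere, Complex.dist_eq, sub_zero] at hζ
    rw [hζ] at h1; exact lt_irrefl R h1
  have hgcont : ∀ n : ℕ, ContinuousOn (fun ζ => f ζ * ζ ^ n / LP k s ζ)
      (Metric.sphere (0:ℂ) R) := fun n =>
    ((hf.continuous.mul (continuous_pow n)).continuousOn).div hLPcont.continuousOn hLPne
  have hInt : ∀ n : ℕ, CircleIntegrable (fun ζ => f ζ * ζ ^ n / LP k s ζ) 0 R := fun n =>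
    ContinuousOn.circleIntegrable hR.le (hgcont n)
  have hInt2 : ∀ (a : ℂ) (n : ℕ),
      CircleIntegrable (fun ζ => a * (f ζ * ζ ^ n / LP k s ζ)) 0 R := fun a n =>
    ContinuousOn.circleIntegrable hR.le (continuousOn_const.mul (hgcont n))
  have hsum : ∀ (F : Fin k → ℂ → ℂ), (∀ i, CircleIntegrable (F i) 0 R) →
      (∮ ζ in C(0,R), ∑ i, F i ζ) = ∑ i, ∮ ζ in C(0,R), F i ζ := by
    intro F hF
    simp only [circleIntegral, Finset.smul_sum]
    rw [intervalIntegral.integral_finset_sum]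
    intro i _; exact (hF i).out
  have hadd : ∀ (F G : ℂ → ℂ), CircleIntegrable F 0 R → CircleIntegrable G 0 R →
      (∮ ζ in C(0,R), (F ζ + G ζ)) = (∮ ζ in C(0,R), F ζ) + ∮ ζ in C(0,R), G ζ := by
    intro F G hF hG
    simp only [circleIntegral, smul_add]
    exact intervalIntegral.integral_add hF.out hG.out
  have hf0 : (∮ ζ in C(0,R), f ζ) = 0 :=
    circleIntegral_eq_zero_of_differentiable_on_off_countable hR.le Set.countable_empty
      hf.continuous.continuousOn (fun z _ => hf z)
  funext h
  simp only [Matrix.mulVec, dotProduct, LcompA]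
  by_cases hc : (h : ℕ) = k - 1
  · -- last row
    simp only [if_pos hc]
    have hS : ∀ ζ : ℂ, f ζ * ζ ^ k = f ζ * LP k s ζ +
        ∑ i : Fin k, (-1:ℂ) ^ ((i:ℕ)+2) * s i * (f ζ * ζ ^ (k - 1 - (i:ℕ))) := by
      intro ζ
      simp only [LP, mul_add, Finset.mul_sum]
      rw [add_assoc, ← Finset.sum_add_distrib, left_eq_add]
      apply Finset.sum_eq_zero
      intro i _
      ring
    have e1 : (∮ ζ in C(0,R), (ζ * f ζ) * ζ ^ (h:ℕ) / LP k s ζ)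
        = ∮ ζ in C(0,R), (f ζ + ∑ i : Fin k,
            (-1:ℂ) ^ ((i:ℕ)+2) * s i * (f ζ * ζ ^ (k - 1 - (i:ℕ)) / LP k s ζ)) := by
      apply circleIntegral.integral_congr hR.le
      intro ζ hζ
      have hne := hLPne ζ hζ
      have hz : (ζ * f ζ) * ζ ^ (h:ℕ) = f ζ * ζ ^ k := by
        have hp : ζ * ζ ^ ((h:ℕ)) = ζ ^ k := by
          rw [← pow_succ']; congr 1; omega
        calc (ζ * f ζ) * ζ ^ (h:ℕ) = f ζ * (ζ * ζ ^ (h:ℕ)) := by ring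
          _ = f ζ * ζ ^ k := by rw [hp]
      simp only [hz, hS ζ, add_div, mul_div_cancel_right₀ _ hne, Finset.sum_div,
        mul_div_assoc]
    rw [e1]
    rw [hadd _ _ (hf.continuous.continuousOn.circleIntegrable hR.le)
      (ContinuousOn.circleIntegrable hR.le (by
        apply continuousOn_finset_sum
        intro i _
        exact continuousOn_const.mul (hgcont _)))]
    rw [hf0, zero_add, hsum _ (fun i => hInt2 _ _)]
    have e2 : ∀ i : Fin k, (∮ ζ in C(0,R),
        (-1:ℂ) ^ ((i:ℕ)+2) * s i * (f ζ * ζ ^ (k - 1 - (i:ℕ)) / LP k s ζ))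
        = (-1:ℂ) ^ ((i:ℕ)+2) * s i * ∮ ζ in C(0,R), f ζ * ζ ^ (k - 1 - (i:ℕ)) / LP k s ζ :=
      fun i => circleIntegral.integral_const_mul _ _ _ _
    simp only [e2]
    rw [Finset.mul_sum]
    apply Fintype.sum_bijective Fin.rev Fin.rev_bijective
    intro i
    have h1 : ((i.rev : ℕ)) = k - 1 - (i:ℕ) := by rw [Fin.val_rev]; omega
    have h2 : k - 1 - (k - 1 - (i:ℕ)) = (i : ℕ) := by have := i.isLt; omega
    simp only [h1, h2, Fin.eta]
    ring
  · -- other rows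
    have hlt : (h:ℕ) + 1 < k := by have := h.isLt; omega
    rw [Finset.sum_eq_single (⟨(h:ℕ)+1, hlt⟩ : Fin k)]
    · rw [if_neg hc, if_pos rfl, one_mul]
      congr 1
      apply circleIntegral.integral_congr hR.le
      intro ζ _
      simp only
      ring
    · intro j _ hj
      rw [if_neg hc, if_neg, zero_mul]
      intro hjv
      exact hj (Fin.ext hjv)
    · intro habs
      exact absurd (Finset.mem_univ _) habs
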